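/- Let N ≥ 2, let M be the N×N matrix with M_{ji} = φ_i(μ_j) > 0 for i ≠ j and M_{jj} = 0, and let π, π' be probability vectors in ℝ^N. Define L⁻ ∈ ℝ^N by L⁻_i = min(π_i − π'_i, 0). If ‖NGMG(L⁻)‖₁ = ‖−M L⁻‖₁ = 0, then π = π', and consequently W₁(π, π') = ∫_M |Σ_n (π_n − π'_n) F_n(x)| dx = 0. -/

import Mathlib

open MeasureTheory Matrix

/-- Gaussian density with mean `μ` and standard deviation `σ`. -/
noncomputable def gaussPDF (μ σ x : ℝ) : ℝ :=
  (1 / (σ * Real.sqrt (2 * Real.pi))) * Real.exp (-((x - μ) ^ 2) / (2 * σ ^ 2))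

/-- Gaussian CDF with mean `μ` and standard deviation `σ`. -/
noncomputable def gaussCDF (μ σ x : ℝ) : ℝ :=
  ∫ s in Set.Iic x, gaussPDF μ σ s

/-- ℓ¹ norm on `Fin N → ℝ`. -/
noncomputable def l1norm {N : ℕ} (v : Fin N → ℝ) : ℝ :=
  ∑ n, |v n|

lemma gaussPDF_pos (μ σ x : ℝ) (hσ : 0 < σ) : 0 < gaussPDF μ σ x := by
  unfold gaussPDF
  have h1 : 0 < σ * Real.sqrt (2 * Real.pi) := by
    positivity
  positivity

/-- if `‖NGMG(L⁻)‖₁ = ‖-M L⁻‖₁ = 0`, where `L⁻ᵢ = min (πᵢ - π'ᵢ) 0` and `M`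
is the Gaussian kernel matrix with zero diagonal, then `π = π'` and the 1-Wasserstein
distance `∫_M |∑ (πₙ - π'ₙ) Fₙ(x)| dx` vanishes. -/
theorem stmt_7 {N : ℕ} (hN : 2 ≤ N) (σ : ℝ) (hσ : 0 < σ)
    (μ : Fin N → ℝ) (hμ : Function.Injective μ)
    (M : Matrix (Fin N) (Fin N) ℝ)
    (hM : ∀ j i, M j i = if i = j then 0 else gaussPDF (μ i) σ (μ j))
    (π π' : Fin N → ℝ)
    (hπ : ∀ n, 0 ≤ π n) (hπs : ∑ n, π n = 1)
    (hπ' : ∀ n, 0 ≤ π' n) (hπ's : ∑ n, π' n = 1)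
    (Lm : Fin N → ℝ) (hLm : ∀ i, Lm i = min (π i - π' i) 0)
    (h0 : l1norm (-(M *ᵥ Lm)) = 0)
    (a b : ℝ) :
    π = π' ∧ ∫ x in Set.Icc a b, |∑ n, (π n - π' n) * gaussCDF (μ n) σ x| = 0 := by
  have hLmle : ∀ i, Lm i ≤ 0 := fun i => (hLm i) ▸ min_le_right _ _
  have hMnn : ∀ j i, 0 ≤ M j i := by
    intro j i
    rw [hM j i]
    split
    · exact le_refl 0
    · exact (gaussPDF_pos _ _ _ hσ).le
  -- each entry of M *ᵥ Lm is zero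
  have hrow : ∀ j, (M *ᵥ Lm) j = 0 := by
    intro j
    have h1 : ∑ n, |(-(M *ᵥ Lm)) n| = 0 := h0
    have h2 : ∀ n ∈ Finset.univ, (0:ℝ) ≤ |(-(M *ᵥ Lm)) n| := fun n _ => abs_nonneg _
    have h3 := (Finset.sum_eq_zero_iff_of_nonneg h2).mp h1 j (Finset.mem_univ j)
    have : (-(M *ᵥ Lm)) j = 0 := abs_eq_zero.mp h3
    simpa using this
  -- each Lm i = 0
  have hLm0 : ∀ i, Lm i = 0 := by
    intro i
    obtain ⟨j, hj⟩ : ∃ j : Fin N, j ≠ i :=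
      Fintype.exists_ne_of_one_lt_card (by rw [Fintype.card_fin]; omega) i
    have hrj := hrow j
    rw [Matrix.mulVec, dotProduct] at hrj
    have hterm : ∀ k ∈ Finset.univ, M j k * Lm k ≤ 0 := fun k _ =>
      mul_nonpos_of_nonneg_of_nonpos (hMnn j k) (hLmle k)
    have h4 : ∀ k ∈ Finset.univ, M j k * Lm k = 0 := by
      have := (Finset.sum_eq_zero_iff_of_nonpos hterm).mp hrj
      exact this
    have h5 := h4 i (Finset.mem_univ i)
    have hpos : 0 < M j i := by
      rw [hM j i, if_neg hj.symm]
      exact gaussPDF_pos _ _ _ hσ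
    exact (mul_eq_zero.mp h5).resolve_left (ne_of_gt hpos)
  -- π i ≥ π' i
  have hge : ∀ i, π' i ≤ π i := by
    intro i
    have h1 := hLm0 i
    rw [hLm i] at h1
    by_contra h
    push_neg at h
    have h2 : min (π i - π' i) 0 = π i - π' i := min_eq_left (by linarith)
    rw [h2] at h1
    linarith
  have hpe : π = π' := by
    funext i
    have hsum : ∑ n, (π n - π' n) = 0 := by
      rw [Finset.sum_sub_distrib, hπs, hπ's]; ring
    have hnn : ∀ n ∈ Finset.univ, (0:ℝ) ≤ π n - π' n := fun n _ => by linarith [hge n]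
    have := (Finset.sum_eq_zero_iff_of_nonneg hnn).mp hsum i (Finset.mem_univ i)
    linarith
  refine ⟨hpe, ?_⟩
  have : ∀ x : ℝ, |∑ n, (π n - π' n) * gaussCDF (μ n) σ x| = 0 := by
    intro x
    rw [hpe]
    simp
  simp only [this, integral_zero]
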